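/- Let u, w ∈ (0,1) with u > w, and let v ∈ (1/2, 1) satisfy 2(u−w)·H₂(v) = (2v−1)·(H₂(u)+H₂(w)). Set r = (H₂(u)+H₂(w))/(2·H₂(v)). Then r ≤ 1 (equivalently H₂(v) ≥ (H₂(u)+H₂(w))/2), and r·(1−2v)·J(v) ≤ (1/2)·(u−w)·(J(w)−J(u)). -/

import Mathlib

/-- Binary entropy function. -/
noncomputable def H2 (x : ℝ) : ℝ := -x * Real.logb 2 x - (1 - x) * Real.logb 2 (1 - x)

/-- `J`, the derivative of the binary entropy function. -/
noncomputable def J (x : ℝ) : ℝ := Real.logb 2 ((1 - x) / x)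

open Real

/-- Gibbs' inequality for binary distributions. -/
private lemma gibbs2 {x p : ℝ} (hx0 : 0 < x) (hx1 : x < 1) (hp0 : 0 < p) (hp1 : p < 1) :
    -x * Real.log x - (1-x) * Real.log (1-x) ≤ -x * Real.log p - (1-x) * Real.log (1-p) := by
  have hx1' : (0:ℝ) < 1 - x := by linarith
  have hp1' : (0:ℝ) < 1 - p := by linarith
  have h1 : Real.log p - Real.log x ≤ p/x - 1 := by
    have h := Real.log_le_sub_one_of_pos (show (0:ℝ) < p/x by positivity)
    rwa [Real.log_div hp0.ne' hx0.ne'] at h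
  have h2 : Real.log (1-p) - Real.log (1-x) ≤ (1-p)/(1-x) - 1 := by
    have h := Real.log_le_sub_one_of_pos (show (0:ℝ) < (1-p)/(1-x) by positivity)
    rwa [Real.log_div hp1'.ne' hx1'.ne'] at h
  have h1' : x * Real.log p - x * Real.log x ≤ p - x := by
    have h := mul_le_mul_of_nonneg_left h1 hx0.le
    have e : x * (p/x - 1) = p - x := by field_simp
    nlinarith [h]
  have h2' : (1-x) * Real.log (1-p) - (1-x) * Real.log (1-x) ≤ x - p := by
    have h := mul_le_mul_of_nonneg_left h2 hx1'.le
    have e : (1-x) * ((1-p)/(1-x) - 1) = x - p := by field_simp; ring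
    nlinarith [h]
  nlinarith [h1', h2']

/-- increment inequality for `t ↦ t log t`. -/
private lemma increment_mul_log {a b Δ : ℝ} (hb : 0 < b) (hba : b ≤ a) (hΔ : 0 ≤ Δ) :
    a * Real.log a - b * Real.log b ≤ (a+Δ) * Real.log (a+Δ) - (b+Δ) * Real.log (b+Δ) := by
  have ha : 0 < a := lt_of_lt_of_le hb hba
  have hpos1 : (0:ℝ) < 1 + Δ/a := by positivity
  have hpos2 : (0:ℝ) < 1 + Δ/b := by positivity
  have bern : 1 + (a/b) * (Δ/a) ≤ (1 + Δ/a) ^ (a/b) := by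
    refine one_add_mul_self_le_rpow_one_add (by nlinarith [div_nonneg hΔ ha.le]) ?_
    rw [le_div_iff₀ hb]; linarith
  have e0 : (a/b) * (Δ/a) = Δ/b := by field_simp
  rw [e0] at bern
  have hlog : Real.log (1 + Δ/b) ≤ (a/b) * Real.log (1 + Δ/a) := by
    calc Real.log (1 + Δ/b) ≤ Real.log ((1 + Δ/a) ^ (a/b)) :=
          Real.log_le_log hpos2 bern
      _ = (a/b) * Real.log (1 + Δ/a) := Real.log_rpow hpos1 _
  have hmul : b * Real.log (1 + Δ/b) ≤ a * Real.log (1 + Δ/a) := by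
    have h := mul_le_mul_of_nonneg_left hlog hb.le
    have e : b * ((a/b) * Real.log (1 + Δ/a)) = a * Real.log (1 + Δ/a) := by
      field_simp
    nlinarith [h]
  have e1 : Real.log (1 + Δ/a) = Real.log (a+Δ) - Real.log a := by
    rw [show (1:ℝ) + Δ/a = (a+Δ)/a by field_simp, Real.log_div (by linarith) ha.ne']
  have e2 : Real.log (1 + Δ/b) = Real.log (b+Δ) - Real.log b := by
    rw [show (1:ℝ) + Δ/b = (b+Δ)/b by field_simp, Real.log_div (by linarith) hb.ne']
  rw [e1, e2] at hmul
  have hmono : Δ * Real.log (b+Δ) ≤ Δ * Real.log (a+Δ) :=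
    mul_le_mul_of_nonneg_left (Real.log_le_log (by linarith) (by linarith)) hΔ
  nlinarith [hmul, hmono]

open Set


private noncomputable def psiF (t : ℝ) : ℝ :=
  2 * Real.log 2 * t^2 - (1+t) * Real.log (1+t) - (1-t) * Real.log (1-t)

private noncomputable def ggF (t : ℝ) : ℝ :=
  4 * Real.log 2 * t - Real.log (1+t) + Real.log (1-t)

private lemma hasDerivAt_psiF {t : ℝ} (h1 : -1 < t) (h2 : t < 1) :
    HasDerivAt psiF (ggF t) t := by
  have h1' : (0:ℝ) < 1 + t := by linarith
  have h2' : (0:ℝ) < 1 - t := by linarith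
  have dA := (hasDerivAt_pow 2 t).const_mul (2 * Real.log 2)
  have inner1 : HasDerivAt (fun t : ℝ => 1 + t) 1 t := by
    simpa using (hasDerivAt_id t).const_add 1
  have inner2 : HasDerivAt (fun t : ℝ => 1 - t) (-1) t := by
    simpa using (hasDerivAt_id t).const_sub 1
  have dB : HasDerivAt (fun t : ℝ => (1+t) * Real.log (1+t))
      (Real.log (1+t) + 1) t := by
    have hlog : HasDerivAt (fun t : ℝ => Real.log (1+t)) (1/(1+t)) t := by
      simpa using (inner1.log h1'.ne')
    have h := inner1.mul hlog
    refine h.congr_deriv ?_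
    field_simp
  have dC : HasDerivAt (fun t : ℝ => (1-t) * Real.log (1-t))
      (-Real.log (1-t) - 1) t := by
    have hlog : HasDerivAt (fun t : ℝ => Real.log (1-t)) (-1/(1-t)) t := by
      simpa using (inner2.log h2'.ne')
    have h := inner2.mul hlog
    refine h.congr_deriv ?_
    field_simp
    ring
  have h := (dA.sub dB).sub dC
  refine h.congr_deriv ?_
  simp only [ggF]
  push_cast
  ring

private lemma hasDerivAt_ggF {t : ℝ} (h1 : -1 < t) (h2 : t < 1) :
    HasDerivAt ggF (4 * Real.log 2 - (1+t)⁻¹ - (1-t)⁻¹) t := by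
  have h1' : (0:ℝ) < 1 + t := by linarith
  have h2' : (0:ℝ) < 1 - t := by linarith
  have inner1 : HasDerivAt (fun t : ℝ => 1 + t) 1 t := by
    simpa using (hasDerivAt_id t).const_add 1
  have inner2 : HasDerivAt (fun t : ℝ => 1 - t) (-1) t := by
    simpa using (hasDerivAt_id t).const_sub 1
  have dA : HasDerivAt (fun t : ℝ => 4 * Real.log 2 * t) (4 * Real.log 2) t := by
    simpa using (hasDerivAt_id t).const_mul (4 * Real.log 2)
  have dB : HasDerivAt (fun t : ℝ => Real.log (1+t)) (1/(1+t)) t := by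
    simpa using (inner1.log h1'.ne')
  have dC : HasDerivAt (fun t : ℝ => Real.log (1-t)) (-1/(1-t)) t := by
    simpa using (inner2.log h2'.ne')
  have h := (dA.sub dB).add dC
  refine h.congr_deriv ?_
  ring

private lemma continuous_psiF : Continuous psiF := by
  have h1 : Continuous fun t : ℝ => (1+t) * Real.log (1+t) := by
    have h := Real.continuous_mul_log.comp (show Continuous fun t : ℝ => 1 + t by continuity)
    exact h
  have h2 : Continuous fun t : ℝ => (1-t) * Real.log (1-t) := by
    have h := Real.continuous_mul_log.comp (show Continuous fun t : ℝ => 1 - t by continuity)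
    exact h
  have h0 : Continuous fun t : ℝ => 2 * Real.log 2 * t^2 := by continuity
  exact (h0.sub h1).sub h2

private lemma concave_ggF : ConcaveOn ℝ (Set.Ico (0:ℝ) 1) ggF := by
  have hconv : Convex ℝ (Set.Ico (0:ℝ) 1) := convex_Ico 0 1
  have hint : interior (Set.Ico (0:ℝ) 1) = Set.Ioo (0:ℝ) 1 := interior_Ico
  refine concaveOn_of_hasDerivWithinAt2_nonpos (f' := fun t => 4 * Real.log 2 - (1+t)⁻¹ - (1-t)⁻¹)
    (f'' := fun t => ((1+t)^2)⁻¹ - ((1-t)^2)⁻¹) hconv ?_ ?_ ?_ ?_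
  · intro x hx
    exact (hasDerivAt_ggF (by linarith [hx.1]) hx.2).continuousAt.continuousWithinAt
  · intro x hx
    rw [hint] at hx
    exact (hasDerivAt_ggF (by linarith [hx.1]) hx.2).hasDerivWithinAt
  · intro x hx
    rw [hint] at hx
    have h1' : (0:ℝ) < 1 + x := by linarith [hx.1]
    have h2' : (0:ℝ) < 1 - x := by linarith [hx.2]
    have inner1 : HasDerivAt (fun t : ℝ => 1 + t) 1 x := by
      simpa using (hasDerivAt_id x).const_add 1
    have inner2 : HasDerivAt (fun t : ℝ => 1 - t) (-1) x := by
      simpa using (hasDerivAt_id x).const_sub 1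
    have d1 := inner1.inv h1'.ne'
    have d2 := inner2.inv h2'.ne'
    have h := ((hasDerivAt_const x (4 * Real.log 2)).sub d1).sub d2
    refine HasDerivAt.hasDerivWithinAt ?_
    refine h.congr_deriv ?_
    field_simp
    ring
  · intro x hx
    rw [hint] at hx
    have h1' : (0:ℝ) < 1 + x := by linarith [hx.1]
    have h2' : (0:ℝ) < 1 - x := by linarith [hx.2]
    have h : ((1+x)^2)⁻¹ ≤ ((1-x)^2)⁻¹ := by
      apply inv_anti₀ (by positivity) (by nlinarith [hx.1])
    linarith

private lemma psiF_one : psiF 1 = 0 := by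
  norm_num [psiF]

private lemma psiF_zero : psiF 0 = 0 := by
  simp [psiF]

private lemma ggF_zero : ggF 0 = 0 := by
  simp [ggF]

/-- The classical quadratic bound: `(1+d)log(1+d) + (1-d)log(1-d) ≤ 2 log 2 · d²` on `[0,1)`. -/
private lemma entropy_quad {d : ℝ} (h0 : 0 ≤ d) (h1 : d < 1) :
    (1+d) * Real.log (1+d) + (1-d) * Real.log (1-d) ≤ 2 * Real.log 2 * d^2 := by
  rcases eq_or_lt_of_le h0 with rfl | hd0
  · simp
  -- it suffices to show psiF d ≥ 0
  suffices hpsi : 0 ≤ psiF d by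
    simp only [psiF] at hpsi; linarith
  -- chord inequalities from concavity of ggF
  have hmemd : d ∈ Set.Ico (0:ℝ) 1 := ⟨h0, h1⟩
  have hmem0 : (0:ℝ) ∈ Set.Ico (0:ℝ) 1 := by constructor <;> norm_num
  have chord1 : ∀ t ∈ Set.Ioo (0:ℝ) d, (t/d) * ggF d ≤ ggF t := by
    intro t ht
    have ha : (0:ℝ) ≤ 1 - t/d := by
      have : t/d ≤ 1 := by rw [div_le_one hd0]; exact ht.2.le
      linarith
    have hb : (0:ℝ) ≤ t/d := div_nonneg ht.1.le hd0.le
    have := concave_ggF.2 hmem0 hmemd ha hb (by ring)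
    have he : (1 - t/d) • (0:ℝ) + (t/d) • d = t := by
      simp only [smul_eq_mul]
      field_simp
      ring
    rw [he] at this
    simpa [ggF_zero] using this
  have chord2 : ∀ t ∈ Set.Ioo d (1:ℝ), ggF t ≤ (t/d) * ggF d := by
    intro t ht
    have ht0 : 0 < t := lt_trans hd0 ht.1
    have hmemt : t ∈ Set.Ico (0:ℝ) 1 := ⟨ht0.le, ht.2⟩
    have ha : (0:ℝ) ≤ 1 - d/t := by
      have : d/t ≤ 1 := by rw [div_le_one ht0]; exact ht.1.le
      linarith
    have hb : (0:ℝ) ≤ d/t := by positivity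
    have h := concave_ggF.2 hmem0 hmemt ha hb (by ring)
    have he : (1 - d/t) • (0:ℝ) + (d/t) • t = d := by
      simp only [smul_eq_mul]
      field_simp
      ring
    rw [he] at h
    simp only [smul_eq_mul, ggF_zero, mul_zero, zero_add] at h
    -- h : d/t * ggF t ≤ ggF d
    rw [← sub_nonneg]
    have e : (t/d) * ggF d - ggF t = (t/d) * (ggF d - (d/t) * ggF t) := by
      field_simp
    rw [e]
    exact mul_nonneg (div_nonneg ht0.le hd0.le) (by linarith)
  rcases le_or_gt 0 (ggF d) with hgg | hgg
  · -- case A : ggF d ≥ 0, show psiF d ≥ (d/2) * ggF d via monotonicity on [0,d]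
    set χ : ℝ → ℝ := fun t => psiF t - t^2/(2*d) * ggF d with hχ
    have hder : ∀ x, -1 < x → x < 1 → HasDerivAt χ (ggF x - x/d * ggF d) x := by
      intro x hx1 hx2
      have d1 := hasDerivAt_psiF hx1 hx2
      have d2 : HasDerivAt (fun t : ℝ => t^2/(2*d) * ggF d) (x/d * ggF d) x := by
        have h := ((hasDerivAt_pow 2 x).div_const (2*d)).mul_const (ggF d)
        refine h.congr_deriv ?_
        push_cast
        field_simp
      exact d1.sub d2
    have hmono : MonotoneOn χ (Set.Icc 0 d) := by
      apply monotoneOn_of_hasDerivWithinAt_nonneg (convex_Icc 0 d)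
        (f' := fun x => ggF x - x/d * ggF d)
      · apply ContinuousOn.sub continuous_psiF.continuousOn
        apply ContinuousOn.mul (by fun_prop) continuousOn_const
      · intro x hx
        rw [interior_Icc] at hx
        exact (hder x (by linarith [hx.1]) (by linarith [hx.2, h1])).hasDerivWithinAt
      · intro x hx
        rw [interior_Icc] at hx
        have := chord1 x hx
        linarith
    have h01 : χ 0 ≤ χ d := hmono ⟨le_refl 0, hd0.le⟩ ⟨hd0.le, le_refl d⟩ hd0.le
    have e0 : χ 0 = 0 := by simp [hχ, psiF_zero]
    have ed : χ d = psiF d - (d/2) * ggF d := by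
      simp only [hχ]
      congr 1
      field_simp
    rw [e0, ed] at h01
    nlinarith [h01, hgg, hd0]
  · -- case B : ggF d < 0, use monotonicity on [d,1]
    set χ : ℝ → ℝ := fun t => t^2/(2*d) * ggF d - psiF t with hχ
    have hder : ∀ x, -1 < x → x < 1 → HasDerivAt χ (x/d * ggF d - ggF x) x := by
      intro x hx1 hx2
      have d1 := hasDerivAt_psiF hx1 hx2
      have d2 : HasDerivAt (fun t : ℝ => t^2/(2*d) * ggF d) (x/d * ggF d) x := by
        have h := ((hasDerivAt_pow 2 x).div_const (2*d)).mul_const (ggF d)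
        refine h.congr_deriv ?_
        push_cast
        field_simp
      exact d2.sub d1
    have hmono : MonotoneOn χ (Set.Icc d 1) := by
      apply monotoneOn_of_hasDerivWithinAt_nonneg (convex_Icc d 1)
        (f' := fun x => x/d * ggF d - ggF x)
      · apply ContinuousOn.sub
        apply ContinuousOn.mul (by fun_prop) continuousOn_const
        exact continuous_psiF.continuousOn
      · intro x hx
        rw [interior_Icc] at hx
        exact (hder x (by linarith [hx.1]) hx.2).hasDerivWithinAt
      · intro x hx
        rw [interior_Icc] at hx
        have := chord2 x hx
        linarith
    have h01 : χ d ≤ χ 1 := hmono ⟨le_refl d, h1.le⟩ ⟨h1.le, le_refl 1⟩ h1.le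
    have ed : χ d = (d/2) * ggF d - psiF d := by
      simp only [hχ]
      congr 1
      field_simp
    have e1 : χ 1 = 1/(2*d) * ggF d := by
      simp [hχ, psiF_one]
    rw [ed, e1] at h01
    -- psiF d ≥ (d/2) * ggF d - 1/(2d) * ggF d = ggF d * (d^2-1)/(2d) > 0
    have hkey : (d/2 - 1/(2*d)) * ggF d ≤ psiF d := by linarith
    have hfac : 0 ≤ (d/2 - 1/(2*d)) * ggF d := by
      have hle : d/2 - 1/(2*d) ≤ 0 := by
        rw [sub_nonpos, div_le_div_iff₀ (by norm_num) (by linarith)]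
        nlinarith
      nlinarith [mul_nonneg (neg_nonneg.2 hle) (neg_nonneg.2 hgg.le)]
    linarith

private lemma key5_half {a b : ℝ} (hb : 0 < b) (hba : b ≤ a) (hsum : a + b ≤ 1) :
    (1 - (a-b)^2) * Real.log (1 - (a-b)^2) + 2*(a-b)*(a * Real.log a - b * Real.log b) ≤ 0 := by
  have ha : 0 < a := lt_of_lt_of_le hb hba
  obtain ⟨d, hd⟩ : ∃ x : ℝ, x = a - b := ⟨_, rfl⟩
  rw [← hd]
  have hd0 : 0 ≤ d := by rw [hd]; linarith
  have hd1 : d < 1 := by rw [hd]; linarith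
  have hΔ : 0 ≤ (1-d)/2 - b := by rw [hd]; linarith
  have inc := increment_mul_log hb hba hΔ
  have ea : a + ((1-d)/2 - b) = (1+d)/2 := by rw [hd]; ring
  have eb : b + ((1-d)/2 - b) = (1-d)/2 := by ring
  rw [ea, eb] at inc
  have h2 : 2*d*(a * Real.log a - b * Real.log b)
      ≤ 2*d*((1+d)/2 * Real.log ((1+d)/2) - (1-d)/2 * Real.log ((1-d)/2)) :=
    mul_le_mul_of_nonneg_left inc (by linarith)
  have l1 : Real.log ((1+d)/2) = Real.log (1+d) - Real.log 2 :=
    Real.log_div (by linarith) (by norm_num)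
  have l2 : Real.log ((1-d)/2) = Real.log (1-d) - Real.log 2 :=
    Real.log_div (by linarith) (by norm_num)
  rw [l1, l2] at h2
  have l3 : Real.log (1 - d^2) = Real.log (1+d) + Real.log (1-d) := by
    rw [show (1:ℝ) - d^2 = (1+d)*(1-d) by ring]
    exact Real.log_mul (by linarith) (by linarith)
  have equad := entropy_quad hd0 hd1
  rw [l3]
  nlinarith [h2, equad]

private lemma key5 {a b : ℝ} (ha : 0 < a) (hb : 0 < b) (hsum : a + b ≤ 1) :
    (1 - (a-b)^2) * Real.log (1 - (a-b)^2) + 2*(a-b)*(a * Real.log a - b * Real.log b) ≤ 0 := by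
  rcases le_total b a with h | h
  · exact key5_half hb h hsum
  · have hk := key5_half ha h (by linarith)
    have e : (1:ℝ) - (b-a)^2 = 1 - (a-b)^2 := by ring
    rw [e] at hk
    nlinarith [hk]

private lemma ent_pos {x : ℝ} (h0 : 0 < x) (h1 : x < 1) :
    0 < -x*Real.log x - (1-x)*Real.log (1-x) := by
  have ha : Real.log x < 0 := Real.log_neg h0 h1
  have hb : Real.log (1-x) < 0 := Real.log_neg (by linarith) (by linarith)
  nlinarith [ha, hb, h0, h1]

private lemma am_gm_sqrt {a b : ℝ} (ha : 0 ≤ a) (hb : 0 ≤ b) :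
    Real.sqrt (a*b) ≤ (a+b)/2 := by
  rw [show (a+b)/2 = Real.sqrt (((a+b)/2)^2) from (Real.sqrt_sq (by linarith)).symm]
  exact Real.sqrt_le_sqrt (by nlinarith [sq_nonneg (a-b)])

/-- Part A : under the constraint, `u - w ≤ 2v - 1`. -/
private lemma partA {u w v : ℝ} (hu0 : 0 < u) (hu1 : u < 1) (hw0 : 0 < w) (hw1 : w < 1)
    (hv12 : 1/2 < v) (hv1 : v < 1)
    (hveqN : 2*(u-w)*(-v*Real.log v - (1-v)*Real.log (1-v)) =
      (2*v-1)*((-u*Real.log u - (1-u)*Real.log (1-u)) + (-w*Real.log w - (1-w)*Real.log (1-w)))) :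
    u - w ≤ 2*v - 1 := by
  have hv0 : 0 < v := by linarith
  have hv1' : (0:ℝ) < 1 - v := by linarith
  have hvN_pos := ent_pos hv0 hv1
  have hX : Real.log (1-v) < Real.log v := Real.log_lt_log hv1' (by linarith)
  by_contra hcon
  push_neg at hcon
  have g1 := gibbs2 hu0 hu1 hv0 hv1
  have g2' := gibbs2 hw0 hw1 (show (0:ℝ) < 1-v by linarith) (by linarith)
  rw [show (1:ℝ) - (1-v) = v by ring] at g2'
  have hadd := add_le_add g1 g2'
  have hid : (-u*Real.log v - (1-u)*Real.log (1-v)) + (-w*Real.log (1-v) - (1-w)*Real.log v)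
      = 2*(-v*Real.log v - (1-v)*Real.log (1-v))
        + ((u-w) - (2*v-1))*(Real.log (1-v) - Real.log v) := by ring
  rw [hid] at hadd
  have hmul := mul_le_mul_of_nonneg_left hadd (show (0:ℝ) ≤ 2*v-1 by linarith)
  have hΔ : 0 < (u-w) - (2*v-1) := by linarith
  linarith [hmul, hveqN, mul_pos hΔ hvN_pos,
    mul_pos (mul_pos (show (0:ℝ) < 2*v-1 by linarith) hΔ)
      (show 0 < -(Real.log (1-v) - Real.log v) by linarith)]

set_option maxHeartbeats 2000000 in
/-- Part B : under the constraint, the key derivative inequality. -/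
private lemma partKEY {u w v : ℝ} (hu0 : 0 < u) (hu1 : u < 1) (hw0 : 0 < w) (hw1 : w < 1)
    (huw : w < u) (hv12 : 1/2 < v) (hv1 : v < 1)
    (hveqN : 2*(u-w)*(-v*Real.log v - (1-v)*Real.log (1-v)) =
      (2*v-1)*((-u*Real.log u - (1-u)*Real.log (1-u)) + (-w*Real.log w - (1-w)*Real.log (1-w)))) :
    0 ≤ (Real.log (1-w) - Real.log w) - (Real.log (1-u) - Real.log u)
      + 2*(Real.log (1-v) - Real.log v) := by
  have hv0 : 0 < v := by linarith
  have hw1' : (0:ℝ) < 1 - w := by linarith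
  have hu1' : (0:ℝ) < 1 - u := by linarith
  have hv1' : (0:ℝ) < 1 - v := by linarith
  obtain ⟨p, hp⟩ : ∃ x : ℝ, x = Real.sqrt (u*(1-w)) := ⟨_, rfl⟩
  obtain ⟨q, hq⟩ : ∃ x : ℝ, x = Real.sqrt (w*(1-u)) := ⟨_, rfl⟩
  obtain ⟨al, hal⟩ : ∃ x : ℝ, x = Real.sqrt (u*w) := ⟨_, rfl⟩
  obtain ⟨be, hbe⟩ : ∃ x : ℝ, x = Real.sqrt ((1-u)*(1-w)) := ⟨_, rfl⟩
  obtain ⟨sg, hsg⟩ : ∃ x : ℝ, x = p + q := ⟨_, rfl⟩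
  have hpuw : (0:ℝ) < u*(1-w) := mul_pos hu0 hw1'
  have hqwu : (0:ℝ) < w*(1-u) := mul_pos hw0 hu1'
  have haluw : (0:ℝ) < u*w := mul_pos hu0 hw0
  have hbeuw : (0:ℝ) < (1-u)*(1-w) := mul_pos hu1' hw1'
  have hp0 : 0 < p := hp ▸ Real.sqrt_pos.2 hpuw
  have hq0 : 0 < q := hq ▸ Real.sqrt_pos.2 hqwu
  have hal0 : 0 < al := hal ▸ Real.sqrt_pos.2 haluw
  have hbe0 : 0 < be := hbe ▸ Real.sqrt_pos.2 hbeuw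
  have hp2 : p^2 = u*(1-w) := by rw [hp]; exact Real.sq_sqrt hpuw.le
  have hq2 : q^2 = w*(1-u) := by rw [hq]; exact Real.sq_sqrt hqwu.le
  have hal2 : al^2 = u*w := by rw [hal]; exact Real.sq_sqrt haluw.le
  have hbe2 : be^2 = (1-u)*(1-w) := by rw [hbe]; exact Real.sq_sqrt hbeuw.le
  have hqp : q < p := by
    rw [hp, hq]
    apply Real.sqrt_lt_sqrt hqwu.le
    have e : u*(1-w) - w*(1-u) = u - w := by ring
    linarith [e]
  have hsg0 : 0 < sg := by rw [hsg]; linarith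
  have hpq : p*q = al*be := by
    rw [hp, hq, hal, hbe, ← Real.sqrt_mul hpuw.le, ← Real.sqrt_mul haluw.le]
    congr 1
    ring
  have hlogp : Real.log p = (Real.log u + Real.log (1-w))/2 := by
    rw [hp, Real.log_sqrt hpuw.le, Real.log_mul hu0.ne' hw1'.ne']
  have hlogq : Real.log q = (Real.log w + Real.log (1-u))/2 := by
    rw [hq, Real.log_sqrt hqwu.le, Real.log_mul hw0.ne' hu1'.ne']
  have hlogal : Real.log al = (Real.log u + Real.log w)/2 := by
    rw [hal, Real.log_sqrt haluw.le, Real.log_mul hu0.ne' hw0.ne']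
  have hlogbe : Real.log be = (Real.log (1-u) + Real.log (1-w))/2 := by
    rw [hbe, Real.log_sqrt hbeuw.le, Real.log_mul hu1'.ne' hw1'.ne']
  have halbesum : al + be ≤ 1 := by
    have h1 : al ≤ (u+w)/2 := hal ▸ am_gm_sqrt hu0.le hw0.le
    have h2 : be ≤ ((1-u)+(1-w))/2 := hbe ▸ am_gm_sqrt hu1'.le hw1'.le
    linarith
  have hsg2 : sg^2 = 1 - (al-be)^2 := by
    have e : sg^2 = p^2 + 2*(p*q) + q^2 := by rw [hsg]; ring
    rw [e, hp2, hq2, hpq]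
    linear_combination hal2 + hbe2
  have key := key5 hal0 hbe0 halbesum
  have hlogsg : Real.log (1 - (al-be)^2) = 2 * Real.log sg := by
    rw [← hsg2, Real.log_pow]
    push_cast
    ring
  rw [hlogsg, hlogal, hlogbe] at key
  have eσp : sg * p = u*(1-w) + al*be := by
    have e : sg*p = p^2 + p*q := by rw [hsg]; ring
    rw [e, hp2, hpq]
  have eσq : sg * q = w*(1-u) + al*be := by
    have e : sg*q = q^2 + p*q := by rw [hsg]; ring
    rw [e, hq2, hpq]
  have hEQ : ((-u*Real.log u - (1-u)*Real.log (1-u)) + (-w*Real.log w - (1-w)*Real.log (1-w)))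
      - (-2*(u*(1-w)+al*be)*((Real.log u + Real.log (1-w))/2 - Real.log sg)
         - 2*(w*(1-u)+al*be)*((Real.log w + Real.log (1-u))/2 - Real.log sg))
      = -((1-(al-be)^2)*(2*Real.log sg)
          + 2*(al-be)*(al*((Real.log u + Real.log w)/2)
            - be*((Real.log (1-u) + Real.log (1-w))/2))) := by
    linear_combination (Real.log u + Real.log w - 2*Real.log sg) * hal2
      + (Real.log (1-u) + Real.log (1-w) - 2*Real.log sg) * hbe2
  have G2 : -2*(sg*p)*((Real.log u + Real.log (1-w))/2 - Real.log sg)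
      - 2*(sg*q)*((Real.log w + Real.log (1-u))/2 - Real.log sg)
      ≤ (-u*Real.log u - (1-u)*Real.log (1-u)) + (-w*Real.log w - (1-w)*Real.log (1-w)) := by
    rw [eσp, eσq]
    linarith [key, hEQ]
  obtain ⟨vh, hvh⟩ : ∃ x : ℝ, x = p / sg := ⟨_, rfl⟩
  have hvh0 : 0 < vh := by rw [hvh]; positivity
  have hvh1 : vh < 1 := by
    rw [hvh, div_lt_one hsg0, hsg]; linarith
  have hvh12 : 1/2 < vh := by
    rw [hvh, lt_div_iff₀ hsg0, hsg]; linarith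
  have h1mvh : 1 - vh = q / sg := by
    have hne : p + q ≠ 0 := by positivity
    rw [hvh, hsg]
    field_simp
    ring
  have hlogvh : Real.log vh = Real.log p - Real.log sg := by
    rw [hvh, Real.log_div hp0.ne' hsg0.ne']
  have hlog1mvh : Real.log (1 - vh) = Real.log q - Real.log sg := by
    rw [h1mvh, Real.log_div hq0.ne' hsg0.ne']
  have G1 : 2*(u-w)*(-vh*Real.log vh - (1-vh)*Real.log (1-vh))
      ≤ (2*vh-1)*((-u*Real.log u - (1-u)*Real.log (1-u))
            + (-w*Real.log w - (1-w)*Real.log (1-w))) := by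
    have hDpq : u - w = (p-q)*sg := by
      have e : (p-q)*sg = p^2 - q^2 := by rw [hsg]; ring
      rw [e, hp2, hq2]; ring
    have hvh21 : 2*vh - 1 = (p-q)/sg := by
      have hne : p + q ≠ 0 := by positivity
      rw [hvh, hsg]
      field_simp
      ring
    have hhvh : -vh*Real.log vh - (1-vh)*Real.log (1-vh)
        = -(p/sg)*(Real.log p - Real.log sg) - (q/sg)*(Real.log q - Real.log sg) := by
      rw [hlogvh, hlog1mvh, h1mvh, hvh]
    rw [hDpq, hvh21, hhvh]
    have hG2' : 2*sg^2 * (-(p/sg)*(Real.log p - Real.log sg) - (q/sg)*(Real.log q - Real.log sg))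
        ≤ (-u*Real.log u - (1-u)*Real.log (1-u)) + (-w*Real.log w - (1-w)*Real.log (1-w)) := by
      have eE : 2*sg^2 * (-(p/sg)*(Real.log p - Real.log sg) - (q/sg)*(Real.log q - Real.log sg))
          = -2*(sg*p)*((Real.log u + Real.log (1-w))/2 - Real.log sg)
            - 2*(sg*q)*((Real.log w + Real.log (1-u))/2 - Real.log sg) := by
        rw [hlogp, hlogq]
        field_simp
      rw [eE]
      exact G2
    have hfrac : 0 ≤ (p-q)/sg := div_nonneg (by linarith) hsg0.le
    have h := mul_le_mul_of_nonneg_left hG2' hfrac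
    calc 2*((p-q)*sg)*(-(p/sg)*(Real.log p - Real.log sg) - (q/sg)*(Real.log q - Real.log sg))
        = (p-q)/sg * (2*sg^2 * (-(p/sg)*(Real.log p - Real.log sg)
            - (q/sg)*(Real.log q - Real.log sg))) := by
          field_simp
      _ ≤ (p-q)/sg * ((-u*Real.log u - (1-u)*Real.log (1-u))
            + (-w*Real.log w - (1-w)*Real.log (1-w))) := h
  have hvlevh : v ≤ vh := by
    by_contra hc
    push_neg at hc
    have gib := gibbs2 hv0 hv1 hvh0 hvh1
    have hsign : 0 ≤ Real.log vh - Real.log (1-vh) := by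
      have h2 : 1 - vh ≤ vh := by linarith
      have := Real.log_le_log (by linarith : (0:ℝ) < 1 - vh) h2
      linarith
    have hvh_ge : -v*Real.log v - (1-v)*Real.log (1-v)
        ≤ -vh*Real.log vh - (1-vh)*Real.log (1-vh) := by
      linarith [gib, mul_nonneg (show (0:ℝ) ≤ v - vh by linarith) hsign]
    linarith [G1, hveqN,
      mul_nonneg (show (0:ℝ) ≤ 2*(u-w) by linarith)
        (sub_nonneg.2 hvh_ge),
      mul_pos (show (0:ℝ) < v - vh by linarith)
        (show 0 < (-u*Real.log u - (1-u)*Real.log (1-u))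
            + (-w*Real.log w - (1-w)*Real.log (1-w)) by
          linarith [ent_pos hu0 hu1, ent_pos hw0 hw1])]
  have h2jvh : 2*(Real.log (1-vh) - Real.log vh)
      = (Real.log (1-u) - Real.log u) - (Real.log (1-w) - Real.log w) := by
    rw [hlogvh, hlog1mvh, hlogq, hlogp]; ring
  have hjv_ge : Real.log (1-vh) - Real.log vh ≤ Real.log (1-v) - Real.log v := by
    have h1 := Real.log_le_log (by linarith : (0:ℝ) < 1 - vh) (by linarith : 1 - vh ≤ 1 - v)
    have h2 := Real.log_le_log hv0 hvlevh
    linarith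
  linarith [h2jvh, hjv_ge]

theorem stmt7 (u w v r : ℝ)
    (hu : u ∈ Set.Ioo (0 : ℝ) 1) (hw : w ∈ Set.Ioo (0 : ℝ) 1) (huw : u > w)
    (hv : v ∈ Set.Ioo (1 / 2 : ℝ) 1)
    (hveq : 2 * (u - w) * H2 v = (2 * v - 1) * (H2 u + H2 w))
    (hr : r = (H2 u + H2 w) / (2 * H2 v)) :
    r ≤ 1 ∧ r * (1 - 2 * v) * J v ≤ (1 / 2) * (u - w) * (J w - J u) := by
  obtain ⟨hu0, hu1⟩ := hu
  obtain ⟨hw0, hw1⟩ := hw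
  obtain ⟨hv12, hv1⟩ := hv
  have hv0 : 0 < v := by linarith
  have hv1' : (0:ℝ) < 1 - v := by linarith
  have hL : (0:ℝ) < Real.log 2 := Real.log_pos (by norm_num)
  have hH2 : ∀ x : ℝ, H2 x * Real.log 2 = -x * Real.log x - (1-x) * Real.log (1-x) := by
    intro x
    simp only [H2, ← Real.log_div_log]
    field_simp
  have hveqN : 2*(u-w)*(-v*Real.log v - (1-v)*Real.log (1-v)) =
      (2*v-1)*((-u*Real.log u - (1-u)*Real.log (1-u)) + (-w*Real.log w - (1-w)*Real.log (1-w))) := by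
    linear_combination Real.log 2 * hveq - 2*(u-w)*(hH2 v) + (2*v-1)*(hH2 u) + (2*v-1)*(hH2 w)
  have hDc : u - w ≤ 2*v - 1 := partA hu0 hu1 hw0 hw1 hv12 hv1 hveqN
  have hvN_pos : 0 < -v*Real.log v - (1-v)*Real.log (1-v) := ent_pos hv0 hv1
  have hH2v : H2 v = (-v*Real.log v - (1-v)*Real.log (1-v)) / Real.log 2 := by
    rw [eq_div_iff hL.ne']
    exact hH2 v
  have hH2v_pos : 0 < H2 v := by
    rw [hH2v]
    exact div_pos hvN_pos hL
  have hr2 : r * (2 * H2 v) = H2 u + H2 w := by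
    rw [hr, div_mul_cancel₀ _ (by positivity : (2:ℝ) * H2 v ≠ 0)]
  have hruw : u - w = (2*v-1) * r := by
    have hcancel : (u-w) * (2 * H2 v) = ((2*v-1) * r) * (2 * H2 v) := by
      linear_combination hveq - (2*v-1) * hr2
    exact mul_right_cancel₀ (by positivity) hcancel
  have h2v1 : (0:ℝ) < 2*v - 1 := by linarith
  have hr_le : r ≤ 1 := by
    have h := hruw ▸ hDc
    exact le_of_mul_le_mul_left (by linarith [h] : (2*v-1) * r ≤ (2*v-1) * 1) h2v1
  refine ⟨hr_le, ?_⟩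
  have main := partKEY hu0 hu1 hw0 hw1 huw hv12 hv1 hveqN
  have hJ : ∀ x : ℝ, 0 < x → x < 1 → J x = (Real.log (1-x) - Real.log x)/Real.log 2 := by
    intro x h0 h1
    simp only [J, ← Real.log_div_log]
    rw [Real.log_div (by linarith : (1:ℝ)-x ≠ 0) h0.ne']
  have hr1m2v : r * (1-2*v) = -(u-w) := by linear_combination hruw
  rw [hJ v hv0 hv1, hJ w hw0 hw1, hJ u hu0 hu1]
  rw [show r * (1 - 2*v) = -(u-w) from hr1m2v]
  rw [← sub_nonneg]
  have e : 1/2*(u-w)*((Real.log (1-w) - Real.log w)/Real.log 2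
        - (Real.log (1-u) - Real.log u)/Real.log 2)
      - (-(u-w)*((Real.log (1-v) - Real.log v)/Real.log 2))
      = (u-w) * ((Real.log (1-w) - Real.log w) - (Real.log (1-u) - Real.log u)
          + 2*(Real.log (1-v) - Real.log v)) / (2*Real.log 2) := by
    field_simp
    ring
  rw [e]
  exact div_nonneg (mul_nonneg (by linarith) main) (by positivity)
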